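/- For every integer a and natural number t: ∑_{k=0}^{t} ψ(ak+1) = (aφ(t+1)(a²φ(t+1)−1))/6, where φ(n) = n(n-1)/2 and ψ(n) = n(n-1)(n-2)/6. -/
import Mathlib


/-- φ(n) = (n-1)n/2 -/
def phi (n : ℤ) : ℤ := n * (n - 1) / 2

/-- ψ(n) = n(n-1)(n-2)/6 -/
def psi (n : ℤ) : ℤ := n * (n - 1) * (n - 2) / 6

lemma six_dvd (n : ℤ) : (6:ℤ) ∣ n * (n - 1) * (n - 2) := by
  have h : ∀ x : ZMod 6, x * (x - 1) * (x - 2) = 0 := by decide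
  have := (ZMod.intCast_zmod_eq_zero_iff_dvd (n * (n - 1) * (n - 2)) 6).mpr
  have h2 : ((n * (n - 1) * (n - 2) : ℤ) : ZMod 6) = 0 := by push_cast; exact h n
  exact (ZMod.intCast_zmod_eq_zero_iff_dvd (n * (n - 1) * (n - 2)) 6).mp h2

lemma two_dvd (n : ℤ) : (2:ℤ) ∣ n * (n - 1) := by
  have h : ∀ x : ZMod 2, x * (x - 1) = 0 := by decide
  have h2 : ((n * (n - 1) : ℤ) : ZMod 2) = 0 := by push_cast; exact h n
  exact (ZMod.intCast_zmod_eq_zero_iff_dvd (n * (n - 1)) 2).mp h2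

lemma six_psi (n : ℤ) : 6 * psi n = n * (n - 1) * (n - 2) :=
  Int.mul_ediv_cancel' (six_dvd n)

lemma two_phi (n : ℤ) : 2 * phi n = n * (n - 1) :=
  Int.mul_ediv_cancel' (two_dvd n)

lemma key (a : ℤ) (t : ℕ) :
    24 * ∑ k ∈ Finset.range (t + 1), psi (a * (k : ℤ) + 1) =
      a ^ 3 * ((t : ℤ) * ((t : ℤ) + 1)) ^ 2 - 2 * a * ((t : ℤ) * ((t : ℤ) + 1)) := by
  induction t with
  | zero => simp [psi]
  | succ t ih =>
    rw [Finset.sum_range_succ, mul_add]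
    have hpsi := six_psi (a * ((t : ℤ) + 1) + 1)
    push_cast at *
    linear_combination ih + 4 * hpsi

theorem sum_psi_succ (a : ℤ) (t : ℕ) :
    ∑ k ∈ Finset.range (t + 1), psi (a * (k : ℤ) + 1) =
      a * phi ((t : ℤ) + 1) * (a ^ 2 * phi ((t : ℤ) + 1) - 1) / 6 := by
  have hphi := two_phi ((t : ℤ) + 1)
  have h6 : a * phi ((t : ℤ) + 1) * (a ^ 2 * phi ((t : ℤ) + 1) - 1) =
      6 * ∑ k ∈ Finset.range (t + 1), psi (a * (k : ℤ) + 1) := by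
    have hk := key a t
    have h4 : 4 * (a * phi ((t : ℤ) + 1) * (a ^ 2 * phi ((t : ℤ) + 1) - 1)) =
        4 * (6 * ∑ k ∈ Finset.range (t + 1), psi (a * (k : ℤ) + 1)) := by
      linear_combination (-1 : ℤ) * hk +
        (a ^ 3 * (2 * phi ((t : ℤ) + 1) + (t : ℤ) * ((t : ℤ) + 1)) - 2 * a) * hphi
    exact mul_left_cancel₀ (by norm_num : (4:ℤ) ≠ 0) h4
  rw [h6, Int.mul_ediv_cancel_left _ (by norm_num)]
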